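/- arXiv:1304.6035 — 3 statements merged into one kernel-verified Lean document; each statement's English description precedes it below -/
import Mathlib

section
/- Let (T, r) be a complete separable metric space, μ a Borel probability measure on T with separable support. Then for μ^⊗ℕ-almost every sequence (uₙ)ₙ∈ℕ, the empirical measures (1/n) ∑ᵢ₌₁ⁿ δ_{uᵢ} converge weakly to μ as n → ∞. -/
open MeasureTheory Filter
open scoped ENNReal NNReal

lemma slln_indicator {T Ω : Type*}
    [MeasurableSpace T] [MeasurableSpace Ω]
    (P : Measure Ω) [IsProbabilityMeasure P]
    (μ : Measure T) [IsProbabilityMeasure μ]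
    (u : ℕ → Ω → T) (hmeas : ∀ i, Measurable (u i))
    (hindep : ProbabilityTheory.iIndepFun u P)
    (hlaw : ∀ i, P.map (u i) = μ)
    {U : Set T} (hU : MeasurableSet U) :
    ∀ᵐ ω ∂P, Tendsto
      (fun n : ℕ => (∑ i ∈ Finset.range n, U.indicator (1 : T → ℝ) (u i ω)) / (n : ℝ))
      atTop (nhds (μ U).toReal) := by
  set g : T → ℝ := U.indicator 1 with hg
  have hgmeas : Measurable g := measurable_one.indicator hU
  have hgb : ∀ x, |g x| ≤ 1 := by
    intro x
    rw [hg]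
    by_cases h : x ∈ U <;> simp [Set.indicator_apply, h]
  have hint : Integrable (fun ω => g (u 0 ω)) P := by
    refine ⟨(hgmeas.comp (hmeas 0)).aestronglyMeasurable, ?_⟩
    exact (hasFiniteIntegral_const (1:ℝ)).mono' (Eventually.of_forall fun ω => hgb _)
  have hindep' : Pairwise (Function.onFun (ProbabilityTheory.IndepFun · · P) (fun i ω => g (u i ω))) := by
    intro i j hij
    exact (hindep.indepFun hij).comp hgmeas hgmeas
  have hident : ∀ i, ProbabilityTheory.IdentDistrib (fun ω => g (u i ω)) (fun ω => g (u 0 ω)) P P := by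
    intro i
    have : ProbabilityTheory.IdentDistrib (u i) (u 0) P P :=
      ⟨(hmeas i).aemeasurable, (hmeas 0).aemeasurable, by rw [hlaw i, hlaw 0]⟩
    exact this.comp hgmeas
  have := ProbabilityTheory.strong_law_ae_real (fun i ω => g (u i ω)) hint hindep' hident
  have hmean : ∫ ω, g (u 0 ω) ∂P = (μ U).toReal := by
    rw [← integral_map (hmeas 0).aemeasurable hgmeas.aestronglyMeasurable, hlaw 0, hg,
      integral_indicator_one hU, measureReal_def]
  simpa only [hmean] using this

/-- Varadarajan: for an i.i.d. sequence `(uₙ)` with common law `μ`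
on a complete separable metric space, almost surely the empirical measures
`(1/n) ∑_{i<n} δ_{uᵢ}` converge weakly to `μ`, i.e. almost every sampled sequence
is `μ`-uniformly distributed. -/
theorem empirical_measures_converge_weakly {T Ω : Type*}
    [MetricSpace T] [CompleteSpace T] [SecondCountableTopology T]
    [MeasurableSpace T] [BorelSpace T] [MeasurableSpace Ω]
    (P : Measure Ω) [IsProbabilityMeasure P]
    (μ : Measure T) [IsProbabilityMeasure μ]
    (u : ℕ → Ω → T) (hmeas : ∀ i, Measurable (u i))
    (hindep : ProbabilityTheory.iIndepFun u P)
    (hlaw : ∀ i, P.map (u i) = μ) :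
    ∀ᵐ ω ∂P, ∀ f : BoundedContinuousFunction T ℝ,
      Tendsto (fun n : ℕ => (∑ i ∈ Finset.range n, f (u i ω)) / (n : ℝ))
        atTop (nhds (∫ x, f x ∂μ)) := by
  classical
  have hμfin : ∀ s : Set T, μ s ≠ (⊤ : ℝ≥0∞) := fun s => measure_ne_top μ s
  set B := TopologicalSpace.countableBasis T with hB
  have hBc : B.Countable := TopologicalSpace.countable_countableBasis T
  have hBbasis := TopologicalSpace.isBasis_countableBasis T
  set S : Set (Set T) := Set.sUnion '' {t | t.Finite ∧ t ⊆ B} with hSdef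
  have hSc : S.Countable := (Set.countable_setOf_finite_subset hBc).image _
  have hSopen : ∀ U ∈ S, IsOpen U := by
    rintro _ ⟨t, ⟨hfin, hsub⟩, rfl⟩
    exact isOpen_sUnion fun s hs => hBbasis.isOpen (hsub hs)
  have hae : ∀ᵐ ω ∂P, ∀ U ∈ S, Tendsto
      (fun n : ℕ => (∑ i ∈ Finset.range n, U.indicator (1 : T → ℝ) (u i ω)) / (n : ℝ))
      atTop (nhds (μ U).toReal) := by
    rw [ae_ball_iff hSc]
    intro U hU
    exact slln_indicator P μ u hmeas hindep hlaw (hSopen U hU).measurableSet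
  filter_upwards [hae] with ω hω
  -- the empirical measures
  set mν : ℕ → Measure T :=
    fun n => (((n : ℝ≥0∞) + 1))⁻¹ • ∑ i ∈ Finset.range (n + 1), Measure.dirac (u i ω) with hmν
  have hνval : ∀ (U : Set T), MeasurableSet U → ∀ n,
      mν n U = ((n : ℝ≥0∞) + 1)⁻¹ *
        ((Finset.range (n + 1)).filter (fun i => u i ω ∈ U)).card := by
    intro U hU n
    rw [hmν]
    simp only [Measure.smul_apply, Measure.finset_sum_apply, smul_eq_mul]
    congr 1
    rw [← Finset.sum_boole]
    refine Finset.sum_congr rfl fun i _ => ?_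
    rw [Measure.dirac_apply' _ hU, Set.indicator_apply]
    split <;> simp
  have hprob : ∀ n, IsProbabilityMeasure (mν n) := by
    intro n
    constructor
    rw [hνval _ MeasurableSet.univ n]
    simp only [Set.mem_univ, Finset.filter_true, Finset.card_range]
    rw [← Nat.cast_add_one, ENNReal.inv_mul_cancel (by simp) (by simp)]
  set ν : ℕ → ProbabilityMeasure T := fun n => ⟨mν n, hprob n⟩ with hν
  set μ' : ProbabilityMeasure T := ⟨μ, ‹_›⟩ with hμ'
  have hcoe : ∀ (m : ProbabilityMeasure T) (s : Set T), ((m s : ℝ≥0) : ℝ)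
      = ((m : Measure T) s).toReal := by
    intro m s
    rw [← ENNReal.coe_toReal, m.ennreal_coeFn_eq_coeFn_toMeasure]
  -- convergence of empirical measure on each U ∈ S
  have htU : ∀ U ∈ S, Tendsto (fun n => (ν n U : ℝ≥0)) atTop (nhds (μ' U)) := by
    intro U hU
    have hUm := (hSopen U hU).measurableSet
    rw [← NNReal.tendsto_coe]
    have hshift : Tendsto
        (fun n : ℕ => (∑ i ∈ Finset.range (n + 1), U.indicator (1 : T → ℝ) (u i ω)) / ((n : ℝ) + 1))
        atTop (nhds (μ U).toReal) := by
      have := (tendsto_add_atTop_iff_nat 1).mpr (hω U hU)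
      simpa [Nat.cast_add] using this
    have hre : ∀ n : ℕ, ((ν n U : ℝ≥0) : ℝ)
        = (∑ i ∈ Finset.range (n + 1), U.indicator (1 : T → ℝ) (u i ω)) / ((n : ℝ) + 1) := by
      intro n
      rw [hcoe]
      show (mν n U).toReal = _
      rw [hνval U hUm n, ENNReal.toReal_mul, ENNReal.toReal_inv]
      have : ∑ i ∈ Finset.range (n + 1), U.indicator (1 : T → ℝ) (u i ω)
          = ((Finset.range (n + 1)).filter (fun i => u i ω ∈ U)).card := by
        rw [← Finset.sum_boole]
        refine Finset.sum_congr rfl fun i _ => ?_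
        rw [Set.indicator_apply]
        split <;> simp
      rw [this, show ((n : ℝ≥0∞) + 1) = ((n + 1 : ℕ) : ℝ≥0∞) by push_cast; ring]
      simp only [ENNReal.toReal_natCast, inv_mul_eq_div]
      push_cast
      ring
    have hμ'U : ((μ' U : ℝ≥0) : ℝ) = (μ U).toReal := hcoe μ' U
    rw [hμ'U]
    simpa only [hre] using hshift
  -- weak convergence via the portmanteau theorem
  have hopens : ∀ G : Set T, IsOpen G → μ' G ≤ atTop.liminf (fun i => ν i G) := by
    intro G hG
    rcases Set.eq_empty_or_nonempty {s | s ∈ B ∧ s ⊆ G} with hc | hc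
    · have hGe : G = ∅ := by
        have h0 := hBbasis.open_eq_sUnion' hG
        rw [show {s | s ∈ B ∧ s ⊆ G} = (∅ : Set (Set T)) from hc] at h0
        simpa using h0
      rw [hGe]
      have h0 : μ' (∅ : Set T) = 0 := by
        apply NNReal.coe_injective
        rw [hcoe μ' ∅]
        simp
      rw [h0]
      exact zero_le
    · obtain ⟨f, hf⟩ := (hBc.mono (fun s hs => hs.1)).exists_eq_range hc
      have hfc : ∀ i, f i ∈ B ∧ f i ⊆ G := by
        intro i
        have : f i ∈ {s | s ∈ B ∧ s ⊆ G} := by rw [hf]; exact Set.mem_range_self i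
        exact this
      have hGU : G = ⋃ i, f i := by
        rw [hBbasis.open_eq_sUnion' hG, hf, Set.sUnion_range]
      have hAccS : ∀ n, Set.accumulate f n ∈ S := by
        intro n
        refine ⟨f '' Set.Iic n, ⟨(Set.finite_Iic n).image f, ?_⟩, ?_⟩
        · rintro _ ⟨i, hi, rfl⟩; exact (hfc i).1
        · rw [Set.sUnion_image, Set.accumulate_def]
          rfl
      have hAccG : ∀ n, Set.accumulate f n ⊆ G := by
        intro n
        rw [Set.accumulate_def]
        exact Set.iUnion₂_subset fun i _ => (hfc i).2
      have hbd : ∀ (s : Set T), IsBoundedUnder (· ≤ ·) atTop (fun i => (ν i s : ℝ≥0)) :=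
        fun s => isBoundedUnder_of ⟨1, fun i => ProbabilityMeasure.apply_le_one _ _⟩
      have h1 : ∀ n, (μ' (Set.accumulate f n) : ℝ≥0) ≤ liminf (fun i => (ν i G : ℝ≥0)) atTop := by
        intro n
        have ht := htU _ (hAccS n)
        rw [← ht.liminf_eq]
        refine liminf_le_liminf (Eventually.of_forall fun i => ?_)
          (isBoundedUnder_of ⟨0, fun i => zero_le⟩)
          (isCoboundedUnder_ge_of_le atTop fun i => ProbabilityMeasure.apply_le_one _ _)
        haveI : IsProbabilityMeasure (ν i : Measure T) := (ν i).2
        have : (ν i : Measure T) (Set.accumulate f n) ≤ (ν i : Measure T) G :=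
          measure_mono (hAccG n)
        have := ENNReal.toNNReal_mono (measure_ne_top _ _) this
        simpa [← ProbabilityMeasure.ennreal_coeFn_eq_coeFn_toMeasure, ENNReal.toNNReal_coe]
          using this
      have htend : Tendsto (fun n => (μ' (Set.accumulate f n) : ℝ≥0)) atTop (nhds (μ' G)) := by
        have h2 : Tendsto (fun n => μ (Set.accumulate f n)) atTop (nhds (μ (⋃ i, f i))) :=
          tendsto_measure_iUnion_accumulate
        rw [← hGU] at h2
        have hfin : μ G ≠ (⊤ : ℝ≥0∞) := hμfin G
        have h3 := (ENNReal.tendsto_toNNReal hfin).comp h2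
        have hcoe2 : ∀ s, (μ' s : ℝ≥0) = (μ s).toNNReal := by
          intro s
          have := hcoe μ' s
          exact (NNReal.coe_injective (by simpa [ENNReal.toReal] using this) :
            (μ' s : ℝ≥0) = ((μ' : Measure T) s).toNNReal)
        simpa only [Function.comp_def, hcoe2] using h3
      exact le_of_tendsto htend (Eventually.of_forall h1)
  have hw : Tendsto ν atTop (nhds μ') :=
    MeasureTheory.tendsto_of_forall_isOpen_le_liminf hopens
  rw [ProbabilityMeasure.tendsto_iff_forall_integral_tendsto] at hw
  intro f
  have hf := hw f
  have hintcomp : ∀ n, ∫ x, f x ∂((ν n : Measure T))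
      = (∑ i ∈ Finset.range (n + 1), f (u i ω)) / ((n : ℝ) + 1) := by
    intro n
    show ∫ x, f x ∂(mν n) = _
    rw [hmν]
    simp only
    rw [integral_smul_measure, integral_finset_sum_measure (fun i _ => f.integrable _)]
    simp only [integral_dirac, smul_eq_mul]
    rw [ENNReal.toReal_inv, show ((n : ℝ≥0∞) + 1) = ((n + 1 : ℕ) : ℝ≥0∞) by push_cast; ring,
      ENNReal.toReal_natCast, inv_mul_eq_div]
    push_cast
    ring
  have : Tendsto (fun n : ℕ => (∑ i ∈ Finset.range (n + 1), f (u i ω)) / ((n : ℝ) + 1))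
      atTop (nhds (∫ x, f x ∂μ)) := by
    have hμeq : ∫ x, f x ∂((μ' : Measure T)) = ∫ x, f x ∂μ := rfl
    simpa only [hintcomp, hμeq] using hf
  rw [← tendsto_add_atTop_iff_nat 1]
  exact this.congr fun n => by push_cast; ring
end

section
/- Let (T, r) and (T′, r′) be ℝ-trees with the same root-distance structure in the following sense: let A ⊆ T, A′ ⊆ T′, and let φ : A → A′ be a surjective isometry. For v ∈ span(A) (the smallest subtree of T containing A), choose x, y ∈ A with v ∈ [x, y], and let w_v be the unique point in [φ(x), φ(y)] with r(x, v) = r′(φ(x), w_v). Then w_v does not depend on the choice of x, y ∈ A with v ∈ [x,y], and the map v ↦ w_v is the unique isometric extension of φ to a map span(A) → span(A′). -/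
open MeasureTheory Filter
open scoped ENNReal NNReal

/-- An ℝ-tree structure on a metric space: a choice of segments `seg x y` which are
geodesic (isometric images of real intervals) and are the images of *all* injective
continuous arcs between their endpoints (unique arcwise connectedness). -/
class RTreeStruct (T : Type*) [MetricSpace T] where
  seg : T → T → Set T
  seg_geodesic : ∀ x y : T, ∃ γ : ℝ → T,
    (∀ s ∈ Set.Icc (0:ℝ) (dist x y), ∀ t ∈ Set.Icc (0:ℝ) (dist x y),
        dist (γ s) (γ t) = |s - t|)
    ∧ γ 0 = x ∧ γ (dist x y) = y ∧ seg x y = γ '' Set.Icc 0 (dist x y)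
  arc_unique : ∀ x y : T, ∀ f : ℝ → T,
    ContinuousOn f (Set.Icc 0 1) → Set.InjOn f (Set.Icc 0 1) →
    f 0 = x → f 1 = y → f '' Set.Icc 0 1 = seg x y

/-- The tree pruned at `v`: points `w` whose segment from the root `ρ` avoids `v`. -/
def pruned {T : Type*} [MetricSpace T] [RTreeStruct T] (ρ v : T) : Set T :=
  {w | v ∉ RTreeStruct.seg ρ w}

namespace RTreeAux

open RTreeStruct

variable {T : Type*} [MetricSpace T] [RTreeStruct T]

structure Geo (x y : T) where
  γ : ℝ → T
  isom : ∀ s ∈ Set.Icc (0:ℝ) (dist x y), ∀ t ∈ Set.Icc (0:ℝ) (dist x y),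
      dist (γ s) (γ t) = |s - t|
  map0 : γ 0 = x
  mapD : γ (dist x y) = y
  image : seg x y = γ '' Set.Icc 0 (dist x y)

noncomputable def geo (x y : T) : Geo x y := by
  choose γ h1 h2 h3 h4 using seg_geodesic x y
  exact ⟨γ, h1, h2, h3, h4⟩

variable {x y : T}

lemma Geo.distx (g : Geo x y) {t : ℝ} (ht : t ∈ Set.Icc 0 (dist x y)) :
    dist x (g.γ t) = t := by
  have := g.isom 0 ⟨le_refl _, dist_nonneg⟩ t ht
  rw [g.map0] at this
  rw [this, abs_of_nonpos (by linarith [ht.1])]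
  ring

lemma Geo.disty (g : Geo x y) {t : ℝ} (ht : t ∈ Set.Icc 0 (dist x y)) :
    dist (g.γ t) y = dist x y - t := by
  have := g.isom t ht (dist x y) ⟨dist_nonneg, le_refl _⟩
  rw [g.mapD] at this
  rw [this, abs_of_nonpos (by linarith [ht.2])]
  ring

lemma Geo.contOn (g : Geo x y) : ContinuousOn g.γ (Set.Icc 0 (dist x y)) := by
  have : LipschitzOnWith 1 g.γ (Set.Icc 0 (dist x y)) := by
    apply LipschitzOnWith.of_dist_le_mul
    intro s hs t ht
    rw [g.isom s hs t ht]
    simp [Real.dist_eq]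
  exact this.continuousOn

lemma dist_add_of_mem {v : T} (hv : v ∈ seg x y) :
    dist x v + dist v y = dist x y := by
  obtain ⟨g⟩ : Nonempty (Geo x y) := ⟨geo x y⟩
  rw [g.image] at hv
  obtain ⟨t, ht, rfl⟩ := hv
  rw [g.distx ht, g.disty ht]; ring

lemma eq_of_dist_of_mem {v v' : T} (hv : v ∈ seg x y) (hv' : v' ∈ seg x y)
    (h : dist x v = dist x v') : v = v' := by
  obtain ⟨g⟩ : Nonempty (Geo x y) := ⟨geo x y⟩
  rw [g.image] at hv hv'
  obtain ⟨t, ht, rfl⟩ := hv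
  obtain ⟨t', ht', rfl⟩ := hv'
  rw [g.distx ht, g.distx ht'] at h
  rw [h]

lemma seg_self (x : T) : seg x x = {x} := by
  obtain ⟨g⟩ : Nonempty (Geo x x) := ⟨geo x x⟩
  have hd : dist x x = 0 := dist_self x
  rw [g.image, hd, Set.Icc_self, Set.image_singleton, g.map0]

lemma left_mem (x y : T) : x ∈ seg x y := by
  obtain ⟨g⟩ : Nonempty (Geo x y) := ⟨geo x y⟩
  rw [g.image]
  exact ⟨0, ⟨le_refl _, dist_nonneg⟩, g.map0⟩

lemma right_mem (x y : T) : y ∈ seg x y := by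
  obtain ⟨g⟩ : Nonempty (Geo x y) := ⟨geo x y⟩
  rw [g.image]
  exact ⟨dist x y, ⟨dist_nonneg, le_refl _⟩, g.mapD⟩

/-- rescaled `arc_unique`. -/
lemma arc_image {x y : T} (f : ℝ → T) (L : ℝ) (hL : 0 < L)
    (hc : ContinuousOn f (Set.Icc 0 L)) (hi : Set.InjOn f (Set.Icc 0 L))
    (h0 : f 0 = x) (hL' : f L = y) : f '' Set.Icc 0 L = seg x y := by
  have himg : (fun t : ℝ => t * L) '' Set.Icc 0 1 = Set.Icc 0 L := by
    rw [Set.image_mul_right_Icc (by norm_num) hL.le]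
    norm_num
  have key := arc_unique x y (fun t => f (t * L)) ?_ ?_ (by simpa using h0)
      (by simpa using hL')
  · rw [← key, ← Set.image_image (g := f) (f := fun t : ℝ => t * L), himg]
  · apply hc.comp ((continuous_mul_right L).continuousOn)
    intro t ht; rw [← himg]; exact ⟨t, ht, rfl⟩
  · intro s hs t ht h
    have := hi (by rw [← himg]; exact ⟨s, hs, rfl⟩) (by rw [← himg]; exact ⟨t, ht, rfl⟩) h
    exact mul_right_cancel₀ hL.ne' this

/-- subsegments of a geodesic. -/
lemma Geo.sub (g : Geo x y) {u u' : ℝ} (huu : u ≤ u') (hu : 0 ≤ u)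
    (hu' : u' ≤ dist x y) : seg (g.γ u) (g.γ u') = g.γ '' Set.Icc u u' := by
  rcases eq_or_lt_of_le huu with rfl | hlt
  · rw [Set.Icc_self, Set.image_singleton, seg_self]
  · have hmem : ∀ t ∈ Set.Icc u u', t ∈ Set.Icc 0 (dist x y) := fun t ht =>
      ⟨hu.trans ht.1, ht.2.trans hu'⟩
    have hsub : Set.Icc u u' ⊆ Set.Icc 0 (dist x y) := hmem
    have hdist : dist (g.γ u) (g.γ u') = u' - u := by
      rw [g.isom u (hsub (Set.left_mem_Icc.2 huu)) u' (hsub (Set.right_mem_Icc.2 huu)),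
        abs_of_nonpos (by linarith)]; ring
    have := arc_image (x := g.γ u) (y := g.γ u') (fun t => g.γ (t + u)) (u' - u)
      (by linarith) ?_ ?_ (by norm_num) (by norm_num)
    · rw [← this]
      ext w
      constructor
      · rintro ⟨t, ht, rfl⟩
        exact ⟨t + u, ⟨by linarith [ht.1], by linarith [ht.2]⟩, rfl⟩
      · rintro ⟨t, ht, rfl⟩
        exact ⟨t - u, ⟨by linarith [ht.1], by linarith [ht.2]⟩, by simp⟩
    · apply g.contOn.comp (continuous_add_right u).continuousOn
      intro t ht
      simp only [Set.mem_Icc] at ht ⊢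
      constructor <;> linarith [ht.1, ht.2]
    · intro s hs t ht h
      simp only at h
      have hs' : s + u ∈ Set.Icc 0 (dist x y) := hsub ⟨by linarith [hs.1], by linarith [hs.2]⟩
      have ht' : t + u ∈ Set.Icc 0 (dist x y) := hsub ⟨by linarith [ht.1], by linarith [ht.2]⟩
      have := g.isom _ hs' _ ht'
      rw [h, dist_self] at this
      have : |s + u - (t + u)| = 0 := this.symm
      rw [abs_eq_zero] at this
      linarith

/-- betweenness implies membership, and splitting of the segment. -/
lemma between (x y v : T) (h : dist x v + dist v y = dist x y) :
    v ∈ seg x y ∧ seg x y = seg x v ∪ seg v y := by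
  set a := dist x v with ha
  set b := dist v y with hb
  rcases eq_or_lt_of_le (dist_nonneg : (0:ℝ) ≤ dist x y) with h0 | hpos
  · have hxv : x = v := dist_eq_zero.1 (by
      have := dist_nonneg (x := x) (y := v); have := dist_nonneg (x := v) (y := y); linarith)
    have hvy : v = y := dist_eq_zero.1 (by
      have := dist_nonneg (x := x) (y := v); have := dist_nonneg (x := v) (y := y); linarith)
    subst hxv; subst hvy
    simp [seg_self]
  · obtain ⟨g1⟩ : Nonempty (Geo x v) := ⟨geo x v⟩
    obtain ⟨g2⟩ : Nonempty (Geo v y) := ⟨geo v y⟩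
    have ha0 : 0 ≤ a := dist_nonneg
    have hb0 : 0 ≤ b := dist_nonneg
    set f : ℝ → T := fun t => if t ≤ a then g1.γ (min a (max 0 t)) else g2.γ (min b (max 0 (t - a))) with hf
    have key1 : ∀ s ∈ Set.Icc (0:ℝ) a, ∀ t ∈ Set.Icc (0:ℝ) b,
        g1.γ s = g2.γ t → s = a ∧ t = 0 := by
      intro s hs t ht hst
      have h1 : dist x (g1.γ s) = s := g1.distx hs
      have h2 : dist (g2.γ t) y = b - t := g2.disty ht
      have htri : dist x y ≤ dist x (g1.γ s) + dist (g2.γ t) y := by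
        rw [hst]; exact dist_triangle _ _ _
      rw [h1, h2, ← h] at htri
      have hsa : s = a := le_antisymm hs.2 (by linarith [ht.1])
      refine ⟨hsa, ?_⟩
      have h3 : dist v (g2.γ t) = t := g2.distx ht
      rw [← hst, hsa, g1.mapD] at h3
      simpa using h3.symm
    have hg1a : g1.γ a = v := by rw [ha]; exact g1.mapD
    have hg2b : g2.γ b = y := by rw [hb]; exact g2.mapD
    have hcont : Continuous f := by
      rw [hf]
      apply continuous_if_le continuous_id continuous_const
      · refine (g1.contOn.comp_continuous
          (continuous_const.min (continuous_const.max continuous_id)) ?_).continuousOn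
        intro t
        rw [← ha]
        exact ⟨le_min ha0 (le_max_left _ _), min_le_left _ _⟩
      · refine (g2.contOn.comp_continuous
          (continuous_const.min (continuous_const.max (continuous_id.sub continuous_const))) ?_).continuousOn
        intro t
        rw [← hb]
        exact ⟨le_min hb0 (le_max_left _ _), min_le_left _ _⟩
      · intro t (hta : t = a)
        rw [hta]
        have e1 : min a (max 0 a) = a := by rw [max_eq_right ha0, min_self]
        have e2 : min b (max 0 (a - a)) = 0 := by rw [sub_self, max_self, min_eq_right hb0]
        rw [e1, e2, hg1a, g2.map0]
    have hval : ∀ t ∈ Set.Icc 0 (a + b), f t = if t ≤ a then g1.γ t else g2.γ (t - a) := by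
      intro t ht
      simp only [Set.mem_Icc] at ht
      by_cases hta : t ≤ a
      · rw [hf]
        simp only [if_pos hta]
        rw [max_eq_right ht.1, min_eq_right hta]
      · rw [hf]
        simp only [if_neg hta]
        push_neg at hta
        rw [max_eq_right (by linarith), min_eq_right (by linarith [ht.2])]
    have hinj : Set.InjOn f (Set.Icc 0 (a + b)) := by
      intro s hs t ht hst
      rw [hval s hs, hval t ht] at hst
      simp only [Set.mem_Icc] at hs ht
      by_cases hsa : s ≤ a <;> by_cases hta : t ≤ a
      · rw [if_pos hsa, if_pos hta] at hst
        have d1 := g1.distx (t := s) ⟨hs.1, hsa⟩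
        have d2 := g1.distx (t := t) ⟨ht.1, hta⟩
        rw [hst] at d1; rw [d2] at d1; exact d1.symm
      · rw [if_pos hsa, if_neg hta] at hst
        obtain ⟨e1, e2⟩ := key1 s ⟨hs.1, hsa⟩ (t - a) ⟨by linarith, by linarith [ht.2]⟩ hst
        push_neg at hta; linarith
      · rw [if_neg hsa, if_pos hta] at hst
        obtain ⟨e1, e2⟩ := key1 t ⟨ht.1, hta⟩ (s - a) ⟨by linarith, by linarith [hs.2]⟩ hst.symm
        push_neg at hsa; linarith
      · rw [if_neg hsa, if_neg hta] at hst
        have d1 := g2.distx (t := s - a) ⟨by linarith, by linarith [hs.2]⟩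
        have d2 := g2.distx (t := t - a) ⟨by linarith, by linarith [ht.2]⟩
        rw [hst] at d1; rw [d2] at d1; linarith
    have hf0 : f 0 = x := by
      rw [hval 0 ⟨le_refl _, by linarith⟩, if_pos ha0, g1.map0]
    have hfL : f (a + b) = y := by
      rw [hval (a + b) ⟨by linarith, le_refl _⟩]
      rcases eq_or_lt_of_le hb0 with hb' | hb'
      · rw [if_pos (by linarith)]
        have hvy : v = y := dist_eq_zero.1 (by rw [← hb]; exact hb'.symm)
        rw [← hb', add_zero, hg1a, hvy]
      · rw [if_neg (by push_neg; linarith), add_sub_cancel_left, g2.mapD]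
    have himg := arc_image f (a + b) (by linarith) hcont.continuousOn hinj hf0 hfL
    have himg2 : f '' Set.Icc 0 (a + b) = seg x v ∪ seg v y := by
      rw [g1.image, g2.image, ← ha, ← hb]
      ext w
      constructor
      · rintro ⟨t, ht, rfl⟩
        rw [hval t ht]
        by_cases hta : t ≤ a
        · rw [if_pos hta]; exact Or.inl ⟨t, ⟨ht.1, hta⟩, rfl⟩
        · rw [if_neg hta]
          push_neg at hta
          simp only [Set.mem_Icc] at ht
          exact Or.inr ⟨t - a, ⟨by linarith, by linarith [ht.2]⟩, rfl⟩
      · rintro (⟨t, ht, rfl⟩ | ⟨t, ht, rfl⟩)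
        · exact ⟨t, ⟨ht.1, by linarith [ht.2]⟩, by
            rw [hval t ⟨ht.1, by linarith [ht.2]⟩, if_pos ht.2]⟩
        · refine ⟨a + t, ⟨by linarith [ht.1], by linarith [ht.2]⟩, ?_⟩
          rw [hval (a + t) ⟨by linarith [ht.1], by linarith [ht.2]⟩]
          rcases eq_or_lt_of_le ht.1 with rfl | ht1
          · rw [if_pos (by linarith), add_zero, hg1a, g2.map0]
          · rw [if_neg (by push_neg; linarith), add_sub_cancel_left]
    have hseg : seg x y = seg x v ∪ seg v y := by
      rw [← himg2, himg]
    constructor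
    · rw [hseg]
      exact Or.inl (right_mem x v)
    · exact hseg

/-- the median point of `x, y, a`. -/
lemma median (x y a : T) : ∃ p, p ∈ seg x y ∧ p ∈ seg x a ∧
    2 * dist x p = dist x a + dist x y - dist a y ∧
    dist a p + dist p y = dist a y := by
  obtain ⟨g⟩ : Nonempty (Geo x y) := ⟨geo x y⟩
  obtain ⟨d⟩ : Nonempty (Geo x a) := ⟨geo x a⟩
  set D := dist x y with hD
  set E := dist x a with hE
  have hD0 : 0 ≤ D := dist_nonneg
  have hE0 : 0 ≤ E := dist_nonneg
  set m := min D E with hm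
  set C : Set ℝ := {t ∈ Set.Icc 0 m | g.γ t = d.γ t} with hC
  have hC0 : (0:ℝ) ∈ C := ⟨⟨le_refl _, le_min hD0 hE0⟩, by rw [g.map0, d.map0]⟩
  have hCne : C.Nonempty := ⟨0, hC0⟩
  have hCbdd : BddAbove C := ⟨m, fun t ht => ht.1.2⟩
  have hCclosed : IsClosed C := by
    have : C = Set.Icc 0 m ∩ (fun t => dist (g.γ t) (d.γ t)) ⁻¹' {0} := by
      ext t
      simp only [hC, Set.mem_setOf_eq, Set.mem_inter_iff, Set.mem_preimage,
        Set.mem_singleton_iff, dist_eq_zero]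
    rw [this]
    apply ContinuousOn.preimage_isClosed_of_isClosed _ isClosed_Icc isClosed_singleton
    exact continuous_dist.comp_continuousOn
      ((g.contOn.mono (fun t ht => ⟨ht.1, le_trans ht.2 (min_le_left _ _)⟩)).prodMk
        (d.contOn.mono (fun t ht => ⟨ht.1, le_trans ht.2 (min_le_right D E)⟩)))
  set c := sSup C with hc
  have hcC : c ∈ C := hCclosed.csSup_mem hCne hCbdd
  have hc0 : 0 ≤ c := hcC.1.1
  have hcm : c ≤ m := hcC.1.2
  have hcD : c ≤ D := hcm.trans (min_le_left _ _)
  have hcE : c ≤ E := hcm.trans (min_le_right D E)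
  set p := g.γ c with hp
  have hpδ : p = d.γ c := hcC.2
  have hpxy : p ∈ seg x y := by rw [g.image]; exact ⟨c, ⟨hc0, hcD⟩, rfl⟩
  have hpxa : p ∈ seg x a := by rw [d.image, hpδ]; exact ⟨c, ⟨hc0, hcE⟩, rfl⟩
  have hdxp : dist x p = c := g.distx ⟨hc0, hcD⟩
  have hdpa : dist a p = E - c := by
    rw [hpδ, dist_comm]; exact d.disty ⟨hc0, hcE⟩
  have hdpy : dist p y = D - c := g.disty ⟨hc0, hcD⟩
  -- key injectivity fact
  have key : ∀ u ∈ Set.Icc c E, ∀ u' ∈ Set.Icc c D, d.γ u = g.γ u' → u = c ∧ u' = c := by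
    intro u hu u' hu' huu
    have e1 : dist x (d.γ u) = u := d.distx ⟨hc0.trans hu.1, hu.2⟩
    have e2 : dist x (g.γ u') = u' := g.distx ⟨hc0.trans hu'.1, hu'.2⟩
    rw [huu] at e1
    have huu' : u = u' := e1.symm.trans e2
    rw [← huu'] at huu hu'
    have humem : u ∈ C := ⟨⟨hc0.trans hu.1, le_min hu'.2 hu.2⟩, huu.symm⟩
    have huc : u = c := le_antisymm (le_csSup hCbdd humem) hu.1
    exact ⟨huc, by rw [← huu']; exact huc⟩
  -- the concatenated arc from a to y through p
  have hkey2 : dist a p + dist p y = dist a y := by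
    set L := (E - c) + (D - c) with hL
    have hL0 : 0 ≤ L := by rw [hL]; linarith
    rcases eq_or_lt_of_le hL0 with hL' | hLpos
    · -- degenerate: c = E = D, p = a = y
      have hcE' : c = E := by rw [hL] at hL'; linarith [sub_nonneg.2 hcE, sub_nonneg.2 hcD]
      have hcD' : c = D := by rw [hL] at hL'; linarith [sub_nonneg.2 hcE, sub_nonneg.2 hcD]
      have hpa : p = a := by rw [hpδ, hcE']; exact d.mapD
      have hpy : p = y := by rw [hp, hcD']; exact g.mapD
      rw [hdpa, hdpy, ← hcE', ← hcD', ← hpa, hpy, dist_self]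
      ring
    · set f : ℝ → T := fun t => if t ≤ E - c then d.γ (min E (max c (E - t)))
        else g.γ (min D (max c (t - (E - c) + c))) with hf
      have hval : ∀ t ∈ Set.Icc 0 L, f t = if t ≤ E - c then d.γ (E - t)
          else g.γ (t - (E - c) + c) := by
        intro t ht
        simp only [Set.mem_Icc] at ht
        by_cases hte : t ≤ E - c
        · rw [hf]
          simp only [if_pos hte]
          rw [max_eq_right (by linarith), min_eq_right (by linarith [ht.1])]
        · rw [hf]
          simp only [if_neg hte]
          push_neg at hte
          rw [max_eq_right (by linarith), min_eq_right (by rw [hL] at ht; linarith [ht.2])]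
      have hcont : Continuous f := by
        rw [hf]
        apply continuous_if_le continuous_id continuous_const
        · refine (d.contOn.comp_continuous (continuous_const.min (continuous_const.max
            (continuous_const.sub continuous_id))) ?_).continuousOn
          intro t
          rw [← hE]
          exact ⟨le_min hE0 (hc0.trans (le_max_left _ _)), min_le_left _ _⟩
        · refine (g.contOn.comp_continuous (continuous_const.min (continuous_const.max
            ((continuous_id.sub continuous_const).add continuous_const))) ?_).continuousOn
          intro t
          rw [← hD]
          exact ⟨le_min hD0 (hc0.trans (le_max_left _ _)), min_le_left _ _⟩
        · intro t (hte : t = E - c)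
          rw [hte]
          have e1 : min E (max c (E - (E - c))) = c := by
            rw [show E - (E - c) = c by ring, max_self, min_eq_right hcE]
          have e2 : min D (max c (E - c - (E - c) + c)) = c := by
            rw [show E - c - (E - c) + c = c by ring, max_self, min_eq_right hcD]
          rw [e1, e2, ← hpδ, hp]
      have hinj : Set.InjOn f (Set.Icc 0 L) := by
        intro s hs t ht hst
        rw [hval s hs, hval t ht] at hst
        simp only [Set.mem_Icc, hL] at hs ht
        by_cases hse : s ≤ E - c <;> by_cases hte : t ≤ E - c
        · rw [if_pos hse, if_pos hte] at hst
          have d1 := d.distx (t := E - s) ⟨by linarith [hs.1], by linarith [hs.1]⟩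
          have d2 := d.distx (t := E - t) ⟨by linarith [ht.1], by linarith [ht.1]⟩
          rw [hst] at d1; rw [d2] at d1; linarith
        · rw [if_pos hse, if_neg hte] at hst
          push_neg at hte
          obtain ⟨e1, e2⟩ := key (E - s) ⟨by linarith, by linarith [hs.1]⟩
            (t - (E - c) + c) ⟨by linarith, by linarith [ht.2]⟩ hst
          linarith
        · rw [if_neg hse, if_pos hte] at hst
          push_neg at hse
          obtain ⟨e1, e2⟩ := key (E - t) ⟨by linarith, by linarith [ht.1]⟩
            (s - (E - c) + c) ⟨by linarith, by linarith [hs.2]⟩ hst.symm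
          linarith
        · rw [if_neg hse, if_neg hte] at hst
          have d1 := g.distx (t := s - (E - c) + c) ⟨by push_neg at hse; linarith, by linarith [hs.2]⟩
          have d2 := g.distx (t := t - (E - c) + c) ⟨by push_neg at hte; linarith, by linarith [ht.2]⟩
          rw [hst] at d1; rw [d2] at d1; linarith
      have hf0 : f 0 = a := by
        rw [hval 0 ⟨le_refl _, hL0⟩, if_pos (by linarith), sub_zero]
        exact d.mapD
      have hfL : f L = y := by
        rw [hval L ⟨hL0, le_refl _⟩]
        by_cases hLe : L ≤ E - c
        · have hcD' : c = D := by rw [hL] at hLe; linarith [sub_nonneg.2 hcD]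
          rw [if_pos hLe, hL, show E - (E - c + (D - c)) = c - (D - c) by ring, ← hcD',
            sub_self, sub_zero, ← hpδ, hp, hcD']
          exact g.mapD
        · rw [if_neg hLe, hL, show E - c + (D - c) - (E - c) + c = D by ring]
          exact g.mapD
      have himg := arc_image f L hLpos hcont.continuousOn hinj hf0 hfL
      have hpmem : p ∈ seg a y := by
        rw [← himg]
        refine ⟨E - c, ⟨by linarith, by linarith⟩, ?_⟩
        rw [hval (E - c) ⟨by linarith, by linarith⟩, if_pos (le_refl _),
          show E - (E - c) = c by ring, ← hpδ]
      exact dist_add_of_mem hpmem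
  exact ⟨p, hpxy, hpxa, by rw [hdxp, ← hkey2, hdpa, hdpy]; ring, hkey2⟩

/-- distance from any point to a point of a segment. -/
lemma dist_formula {x y v : T} (hv : v ∈ seg x y) (a : T) :
    dist a v = max (dist a x - dist x v) (dist a y - dist y v) := by
  obtain ⟨g⟩ : Nonempty (Geo x y) := ⟨geo x y⟩
  obtain ⟨p, hpxy, hpxa, hpd, hpay⟩ := median x y a
  rw [g.image] at hv hpxy
  obtain ⟨t, htI, rfl⟩ := hv
  obtain ⟨s, hsI, hps⟩ := hpxy
  have hxp : dist x p = s := by rw [← hps]; exact g.distx hsI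
  have ht : dist x (g.γ t) = t := g.distx htI
  have hty : dist (g.γ t) y = dist x y - t := g.disty htI
  have hca : dist a x = dist x a := dist_comm a x
  have hcy : dist y (g.γ t) = dist (g.γ t) y := dist_comm y (g.γ t)
  have hcv : dist a (g.γ t) = dist (g.γ t) a := dist_comm a (g.γ t)
  rcases le_total t s with hts | hst
  · -- v ∈ seg x p ⊆ seg x a
    have hseg1 : seg x p = g.γ '' Set.Icc 0 s := by
      have := g.sub (u := 0) (u' := s) hsI.1 (le_refl _) hsI.2
      rwa [g.map0, hps] at this
    obtain ⟨δ⟩ : Nonempty (Geo x a) := ⟨geo x a⟩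
    rw [δ.image] at hpxa
    obtain ⟨u, huI, hpu⟩ := hpxa
    have hseg2 : seg x p = δ.γ '' Set.Icc 0 u := by
      have := δ.sub (u := 0) (u' := u) huI.1 (le_refl _) huI.2
      rwa [δ.map0, hpu] at this
    have hmem : g.γ t ∈ seg x a := by
      rw [δ.image]
      have h1 : g.γ t ∈ seg x p := by rw [hseg1]; exact ⟨t, ⟨htI.1, hts⟩, rfl⟩
      rw [hseg2] at h1
      obtain ⟨w, hwI, hw⟩ := h1
      exact ⟨w, ⟨hwI.1, hwI.2.trans huI.2⟩, hw⟩
    have hva := dist_add_of_mem hmem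
    rw [max_eq_left (by linarith)]
    linarith
  · -- v ∈ seg p y ⊆ seg a y
    have hseg1 : seg p y = g.γ '' Set.Icc s (dist x y) := by
      have := g.sub (u := s) (u' := dist x y) hsI.2 hsI.1 (le_refl _)
      rwa [g.mapD, hps] at this
    have hsplit := (between a y p (by linarith [dist_comm a p, dist_comm p a])).2
    have hmem : g.γ t ∈ seg a y := by
      rw [hsplit]
      exact Or.inr (by rw [hseg1]; exact ⟨t, ⟨hst, htI.2⟩, rfl⟩)
    have hva := dist_add_of_mem hmem
    rw [max_eq_right (by linarith)]
    linarith

/-- the universal formula for distances between points on two segments. -/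
noncomputable def F (Dxy Dxy' t t' dxx dxy' dyx dyy : ℝ) : ℝ :=
  max (max (dxx - t) (dyx - (Dxy - t)) - t')
      (max (dxy' - t) (dyy - (Dxy - t)) - (Dxy' - t'))

lemma dist_F {x y x' y' v v' : T} (hv : v ∈ seg x y) (hv' : v' ∈ seg x' y') :
    dist v v' = F (dist x y) (dist x' y') (dist x v) (dist x' v')
      (dist x x') (dist x y') (dist y x') (dist y y') := by
  have h1 := dist_formula hv' v
  have h2 := dist_formula hv x'
  have h3 := dist_formula hv y'
  have e1 := dist_add_of_mem hv
  have e2 := dist_add_of_mem hv'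
  rw [dist_comm v x', dist_comm v y'] at h1
  rw [F, h1, h2, h3]
  rw [dist_comm x' x, dist_comm x' y, dist_comm y' x, dist_comm y' y,
    show dist y v = dist x y - dist x v from by rw [dist_comm]; linarith,
    show dist y' v' = dist x' y' - dist x' v' from by rw [dist_comm]; linarith]

lemma exists_point {x y : T} {t : ℝ} (ht : t ∈ Set.Icc 0 (dist x y)) :
    ∃ w ∈ seg x y, dist x w = t := by
  obtain ⟨g⟩ : Nonempty (Geo x y) := ⟨geo x y⟩
  exact ⟨g.γ t, by rw [g.image]; exact ⟨t, ht, rfl⟩, g.distx ht⟩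

end RTreeAux

/-- an isometry `φ : A → A'` between subsets of ℝ-trees extends
uniquely to an isometry of the spanned subtrees: for `v ∈ span(A)` with
`v ∈ [x,y]`, `x,y ∈ A`, the point `w_v ∈ [φ(x),φ(y)]` with `r(x,v) = r'(φ(x),w_v)`
is independent of the choice of `x,y`, and `v ↦ w_v` is the unique isometric
extension `span(A) → span(A')`. -/
theorem isometry_extends_to_span {T T' : Type*}
    [MetricSpace T] [RTreeStruct T] [MetricSpace T'] [RTreeStruct T']
    (A : Set T) (hA : A.Nonempty) (φ : T → T')
    (hiso : ∀ x ∈ A, ∀ y ∈ A, dist (φ x) (φ y) = dist x y) :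
    (∀ v x y x' y' w w', x ∈ A → y ∈ A → x' ∈ A → y' ∈ A →
        v ∈ RTreeStruct.seg x y → v ∈ RTreeStruct.seg x' y' →
        w ∈ RTreeStruct.seg (φ x) (φ y) → w' ∈ RTreeStruct.seg (φ x') (φ y') →
        dist (φ x) w = dist x v → dist (φ x') w' = dist x' v → w = w') ∧
    ∃ ψ : T → T',
      (Set.EqOn ψ φ A) ∧
      (∀ v ∈ ⋃ x ∈ A, ⋃ y ∈ A, RTreeStruct.seg x y,
        ∀ w ∈ ⋃ x ∈ A, ⋃ y ∈ A, RTreeStruct.seg x y,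
          dist (ψ v) (ψ w) = dist v w) ∧
      (ψ '' (⋃ x ∈ A, ⋃ y ∈ A, RTreeStruct.seg x y)
        ⊆ ⋃ x ∈ A, ⋃ y ∈ A, RTreeStruct.seg (φ x) (φ y)) ∧
      (∀ ψ' : T → T',
        Set.EqOn ψ' φ A →
        (∀ v ∈ ⋃ x ∈ A, ⋃ y ∈ A, RTreeStruct.seg x y,
          ∀ w ∈ ⋃ x ∈ A, ⋃ y ∈ A, RTreeStruct.seg x y,
            dist (ψ' v) (ψ' w) = dist v w) →
        (ψ' '' (⋃ x ∈ A, ⋃ y ∈ A, RTreeStruct.seg x y)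
          ⊆ ⋃ x ∈ A, ⋃ y ∈ A, RTreeStruct.seg (φ x) (φ y)) →
        Set.EqOn ψ' ψ (⋃ x ∈ A, ⋃ y ∈ A, RTreeStruct.seg x y)) := by
  classical
  open RTreeAux in
  have key : ∀ v x y x' y' w w', x ∈ A → y ∈ A → x' ∈ A → y' ∈ A →
      v ∈ RTreeStruct.seg x y → v ∈ RTreeStruct.seg x' y' →
      w ∈ RTreeStruct.seg (φ x) (φ y) → w' ∈ RTreeStruct.seg (φ x') (φ y') →
      dist (φ x) w = dist x v → dist (φ x') w' = dist x' v → w = w' := by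
    intro v x y x' y' w w' hx hy hx' hy' hv1 hv2 hw hw' he he'
    have h1 := RTreeAux.dist_F hw hw'
    have h2 := RTreeAux.dist_F hv1 hv2
    rw [hiso x hx y hy, hiso x' hx' y' hy', hiso x hx x' hx', hiso x hx y' hy',
      hiso y hy x' hx', hiso y hy y' hy', he, he'] at h1
    have h3 : dist w w' = dist v v := by rw [h1, h2]
    rw [dist_self] at h3
    exact dist_eq_zero.1 h3
  refine ⟨key, ?_⟩
  set P : T → T' → Prop := fun v w => ∃ x, x ∈ A ∧ ∃ y, y ∈ A ∧
    v ∈ RTreeStruct.seg x y ∧ w ∈ RTreeStruct.seg (φ x) (φ y) ∧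
    dist (φ x) w = dist x v with hPdef
  have uniqP : ∀ v w w', P v w → P v w' → w = w' := by
    rintro v w w' ⟨x, hx, y, hy, hv1, hw1, hd1⟩ ⟨x', hx', y', hy', hv2, hw2, hd2⟩
    exact key v x y x' y' w w' hx hy hx' hy' hv1 hv2 hw1 hw2 hd1 hd2
  have exP : ∀ v ∈ ⋃ x ∈ A, ⋃ y ∈ A, RTreeStruct.seg x y, ∃ w, P v w := by
    intro v hv
    simp only [Set.mem_iUnion] at hv
    obtain ⟨x, hx, y, hy, hvseg⟩ := hv
    have hsum := RTreeAux.dist_add_of_mem hvseg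
    have ht : dist x v ∈ Set.Icc 0 (dist (φ x) (φ y)) := by
      rw [hiso x hx y hy]
      exact ⟨dist_nonneg, by linarith [dist_nonneg (x := v) (y := y)]⟩
    obtain ⟨w, hw, hwd⟩ := RTreeAux.exists_point ht
    exact ⟨w, x, hx, y, hy, hvseg, hw, hwd⟩
  set ψ : T → T' := fun v => if h : ∃ w, P v w then h.choose else φ v with hψdef
  have hP : ∀ v ∈ ⋃ x ∈ A, ⋃ y ∈ A, RTreeStruct.seg x y, P v (ψ v) := by
    intro v hv
    have h := exP v hv
    rw [hψdef]
    simp only [dif_pos h]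
    exact h.choose_spec
  have hAS : ∀ x ∈ A, x ∈ ⋃ x ∈ A, ⋃ y ∈ A, RTreeStruct.seg x y := by
    intro x hx
    simp only [Set.mem_iUnion]
    exact ⟨x, hx, x, hx, RTreeAux.left_mem x x⟩
  have hEqOn : Set.EqOn ψ φ A := by
    intro x hx
    refine uniqP x _ _ (hP x (hAS x hx)) ?_
    exact ⟨x, hx, x, hx, RTreeAux.left_mem x x, RTreeAux.left_mem (φ x) (φ x), by simp⟩
  have hIso : ∀ v ∈ ⋃ x ∈ A, ⋃ y ∈ A, RTreeStruct.seg x y,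
      ∀ w ∈ ⋃ x ∈ A, ⋃ y ∈ A, RTreeStruct.seg x y,
        dist (ψ v) (ψ w) = dist v w := by
    intro v hv w hw
    obtain ⟨x, hx, y, hy, hv1, hw1, hd1⟩ := hP v hv
    obtain ⟨x', hx', y', hy', hv2, hw2, hd2⟩ := hP w hw
    have h1 := RTreeAux.dist_F hw1 hw2
    have h2 := RTreeAux.dist_F hv1 hv2
    rw [hiso x hx y hy, hiso x' hx' y' hy', hiso x hx x' hx', hiso x hx y' hy',
      hiso y hy x' hx', hiso y hy y' hy', hd1, hd2] at h1
    rw [h1, h2]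
  refine ⟨ψ, hEqOn, hIso, ?_, ?_⟩
  · rintro _ ⟨v, hv, rfl⟩
    obtain ⟨x, hx, y, hy, hv1, hw1, hd1⟩ := hP v hv
    simp only [Set.mem_iUnion]
    exact ⟨x, hx, y, hy, hw1⟩
  · intro ψ' hEq' hIso' _ v hv
    have hv' := hv
    simp only [Set.mem_iUnion] at hv'
    obtain ⟨x, hx, y, hy, hvseg⟩ := hv'
    refine uniqP v _ _ ?_ (hP v hv)
    have d1 : dist (φ x) (ψ' v) = dist x v := by
      rw [← hEq' hx]; exact hIso' x (hAS x hx) v hv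
    have d2 : dist (ψ' v) (φ y) = dist v y := by
      rw [← hEq' hy, dist_comm (ψ' v), dist_comm v y]; exact hIso' y (hAS y hy) v hv
    have hsum := RTreeAux.dist_add_of_mem hvseg
    have hmem : ψ' v ∈ RTreeStruct.seg (φ x) (φ y) :=
      (RTreeAux.between (φ x) (φ y) (ψ' v) (by rw [d1, d2, hiso x hx y hy]; exact hsum)).1
    exact ⟨x, hx, y, hy, hvseg, hmem, d1⟩
end

section
/- Let (μ_N)_{N∈ℕ} be a sequence of finite Borel measures on a common metric space that is uniformly bounded in total mass and converges setwise to a finite measure μ_∞ (i.e. μ_N(A) → μ_∞(A) for every Borel set A). Let (f_N) be uniformly bounded measurable functions converging pointwise to f on a set G whose complement B is μ_∞-null. Then ∫ f_N dμ_N → ∫ f dμ_∞, provided additionally μ_N(B) → μ_∞(B) = 0. -/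
open MeasureTheory Filter
open scoped ENNReal

private lemma aux_lintegral_tendsto {X : Type*} [MeasurableSpace X]
    (μ : ℕ → Measure X) (μ' : Measure X)
    (C : ℝ≥0∞) (hC : C ≠ ∞) (hbd : ∀ N, μ N Set.univ ≤ C)
    (hset : ∀ A : Set X, MeasurableSet A →
      Tendsto (fun N => μ N A) atTop (nhds (μ' A)))
    (h : X → ℝ) (hm : Measurable h) (K : ℝ)
    (h0 : ∀ x, 0 ≤ h x) (hK : ∀ x, h x ≤ K) :
    Tendsto (fun N => ∫⁻ x, ENNReal.ofReal (h x) ∂(μ N)) atTop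
      (nhds (∫⁻ x, ENNReal.ofReal (h x) ∂μ')) := by
  have key : ∀ ν : Measure X, ∫⁻ x, ENNReal.ofReal (h x) ∂ν
      = ∫⁻ t in Set.Ioi (0:ℝ), ν {a | t < h a} := fun ν =>
    lintegral_eq_lintegral_meas_lt ν (Eventually.of_forall h0) hm.aemeasurable
  simp_rw [key]
  refine tendsto_lintegral_of_dominated_convergence
      (Set.indicator (Set.Iio K) fun _ => C) (fun N => ?_) (fun N => ?_) ?_ ?_
  · exact Antitone.measurable fun s t hst =>
      measure_mono fun a ha => lt_of_le_of_lt hst ha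
  · refine Eventually.of_forall fun t => ?_
    by_cases ht : t ∈ Set.Iio K
    · simpa [Set.indicator_of_mem, ht] using le_trans (measure_mono (Set.subset_univ _)) (hbd N)
    · have : {a | t < h a} = ∅ := by
        ext a
        simp only [Set.mem_setOf_eq, Set.mem_empty_iff_false, iff_false, not_lt]
        exact (hK a).trans (not_lt.mp (by simpa using ht))
      simp [Set.indicator_of_notMem, ht, this]
  · rw [lintegral_indicator measurableSet_Iio, setLIntegral_const,
      Measure.restrict_apply measurableSet_Iio, Set.Iio_inter_Ioi, Real.volume_Ioo]
    exact ENNReal.mul_ne_top hC ENNReal.ofReal_ne_top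
  · exact Eventually.of_forall fun t => hset _ (measurableSet_lt measurable_const hm)

private lemma aux_integral_tendsto {X : Type*} [MeasurableSpace X]
    (μ : ℕ → Measure X) (μ' : Measure X)
    [∀ N, IsFiniteMeasure (μ N)] [IsFiniteMeasure μ']
    (C : ℝ≥0∞) (hC : C ≠ ∞) (hbd : ∀ N, μ N Set.univ ≤ C)
    (hset : ∀ A : Set X, MeasurableSet A →
      Tendsto (fun N => μ N A) atTop (nhds (μ' A)))
    (h : X → ℝ) (hm : Measurable h) (K : ℝ) (hK : ∀ x, |h x| ≤ K) :
    Tendsto (fun N => ∫ x, h x ∂(μ N)) atTop (nhds (∫ x, h x ∂μ')) := by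
  cases isEmpty_or_nonempty X with
  | inl hX => simp only [integral_of_isEmpty]; exact tendsto_const_nhds
  | inr hX =>
    have hK0 : 0 ≤ K := le_trans (abs_nonneg _) (hK (Classical.arbitrary X))
    set h' : X → ℝ := fun x => h x + K with hh'
    have hm' : Measurable h' := hm.add_const K
    have h'0 : ∀ x, 0 ≤ h' x := fun x => by
      have := (abs_le.mp (hK x)).1; simp only [hh']; linarith
    have h'K : ∀ x, h' x ≤ K + K := fun x => by
      have := (abs_le.mp (hK x)).2; simp only [hh']; linarith
    have hfin : ∫⁻ x, ENNReal.ofReal (h' x) ∂μ' ≠ ∞ := by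
      refine ne_of_lt (lt_of_le_of_lt (lintegral_mono fun x =>
        ENNReal.ofReal_le_ofReal (h'K x)) ?_)
      rw [lintegral_const]
      exact ENNReal.mul_lt_top ENNReal.ofReal_lt_top (measure_lt_top μ' _)
    have L := aux_lintegral_tendsto μ μ' C hC hbd hset h' hm' (K + K) h'0 h'K
    have L2 : Tendsto (fun N => (∫⁻ x, ENNReal.ofReal (h' x) ∂(μ N)).toReal) atTop
        (nhds (∫⁻ x, ENNReal.ofReal (h' x) ∂μ').toReal) :=
      (ENNReal.tendsto_toReal hfin).comp L
    have int_h : ∀ (ν : Measure X) [IsFiniteMeasure ν], Integrable h ν := fun ν _ =>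
      (integrable_const K).mono' hm.aestronglyMeasurable
        (Eventually.of_forall fun x => by simpa [Real.norm_eq_abs] using hK x)
    have eq1 : ∀ (ν : Measure X) [IsFiniteMeasure ν],
        ∫ x, h x ∂ν = (∫⁻ x, ENNReal.ofReal (h' x) ∂ν).toReal - (ν Set.univ).toReal * K := by
      intro ν _
      have e1 : ∫ x, h' x ∂ν = (∫⁻ x, ENNReal.ofReal (h' x) ∂ν).toReal :=
        integral_eq_lintegral_of_nonneg_ae (Eventually.of_forall h'0)
          hm'.aestronglyMeasurable
      have e2 : ∫ x, h' x ∂ν = ∫ x, h x ∂ν + (ν Set.univ).toReal * K := by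
        simp only [hh']
        rw [integral_add (int_h ν) (integrable_const K), integral_const, smul_eq_mul]; rfl
      linarith
    have Lmass : Tendsto (fun N => (μ N Set.univ).toReal * K) atTop
        (nhds ((μ' Set.univ).toReal * K)) :=
      (((ENNReal.tendsto_toReal (measure_ne_top μ' _)).comp
        (hset Set.univ MeasurableSet.univ))).mul_const K
    have final := L2.sub Lmass
    rw [show (∫ x, h x ∂μ') = _ from eq1 μ']
    exact final.congr fun N => (eq1 (μ N)).symm

/-- if finite measures `μ_N` with uniformly bounded masses converge
setwise to `μ_∞`, and uniformly bounded measurable `f_N → f` pointwise outside a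
set `B` with `μ_∞(B) = 0` and `μ_N(B) → 0`, then `∫ f_N dμ_N → ∫ f dμ_∞`. -/
theorem setwise_convergence_integral {X : Type*}
    [MetricSpace X] [MeasurableSpace X] [BorelSpace X]
    (μ : ℕ → Measure X) (μ' : Measure X)
    [∀ N, IsFiniteMeasure (μ N)] [IsFiniteMeasure μ']
    (hbd : ∃ C : ℝ≥0∞, C < ∞ ∧ ∀ N, μ N Set.univ ≤ C)
    (hset : ∀ A : Set X, MeasurableSet A →
      Tendsto (fun N => μ N A) atTop (nhds (μ' A)))
    (f : ℕ → X → ℝ) (g : X → ℝ)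
    (hfm : ∀ N, Measurable (f N)) (hgm : Measurable g)
    (M : ℝ) (hub : ∀ N x, |f N x| ≤ M)
    (G B : Set X) (hB : B = Gᶜ)
    (hconv : ∀ x ∈ G, Tendsto (fun N => f N x) atTop (nhds (g x)))
    (hBnull : μ' B = 0)
    (hμNB : Tendsto (fun N => μ N B) atTop (nhds 0)) :
    Tendsto (fun N => ∫ x, f N x ∂(μ N)) atTop (nhds (∫ x, g x ∂μ')) := by
  obtain ⟨C, hC, hbd⟩ := hbd
  set M' : ℝ := max M 0 with hM'
  have hM'0 : 0 ≤ M' := le_max_right _ _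
  have hub' : ∀ N x, |f N x| ≤ M' := fun N x => (hub N x).trans (le_max_left _ _)
  have hae : ∀ᵐ x ∂μ', Tendsto (fun N => f N x) atTop (nhds (g x)) := by
    rw [ae_iff]
    refine measure_mono_null (fun x hx => ?_) hBnull
    by_contra hxB
    exact hx (hconv x (by simpa [hB] using hxB))
  have hgbd : ∀ᵐ x ∂μ', |g x| ≤ M' := by
    rw [ae_iff]
    refine measure_mono_null (fun x hx => ?_) hBnull
    by_contra hxB
    have hxG : x ∈ G := by simpa [hB] using hxB
    exact hx (le_of_tendsto (hconv x hxG).abs (Eventually.of_forall fun N => hub' N x))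
  have hgint : Integrable g μ' := (integrable_const M').mono' hgm.aestronglyMeasurable
    (by filter_upwards [hgbd] with x hx; simpa [Real.norm_eq_abs] using hx)
  have hmass : ∀ N, (μ N Set.univ).toReal ≤ C.toReal + 1 := fun N =>
    le_trans (ENNReal.toReal_mono hC.ne (hbd N)) (by linarith)
  have hCr0 : (0:ℝ) < C.toReal + 1 := by positivity
  rw [Metric.tendsto_nhds]
  intro ε hε
  set δ : ℝ := ε / (8 * (M' + 1)) with hδdef
  have hδ0 : 0 < δ := by positivity
  have hδeq : δ * (8 * (M' + 1)) = ε := div_mul_cancel₀ _ (by positivity)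
  set δ' : ℝ := ε / (8 * (C.toReal + 1)) with hδ'def
  have hδ'0 : 0 < δ' := by positivity
  have hδ'eq : δ' * (8 * (C.toReal + 1)) = ε := div_mul_cancel₀ _ (by positivity)
  obtain ⟨t, htm, htμ, htu⟩ := tendstoUniformlyOn_of_ae_tendsto'
    (μ := μ') (fun N => (hfm N).stronglyMeasurable) hgm.stronglyMeasurable hae hδ0
  have hgt : ∀ x ∈ tᶜ, |g x| ≤ M' := fun x hx =>
    le_of_tendsto (htu.tendsto_at hx).abs (Eventually.of_forall fun N => hub' N x)
  set h : X → ℝ := tᶜ.indicator g with hh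
  have hhm : Measurable h := hgm.indicator htm.compl
  have hhbd : ∀ x, |h x| ≤ M' := by
    intro x
    by_cases hx : x ∈ tᶜ
    · rw [hh, Set.indicator_of_mem hx]; exact hgt x hx
    · rw [hh, Set.indicator_of_notMem hx]; simpa using hM'0
  have hT3 := aux_integral_tendsto μ μ' C hC.ne hbd hset h hhm M' hhbd
  have inth : ∀ (ν : Measure X) [IsFiniteMeasure ν], Integrable h ν := fun ν _ =>
    (integrable_const M').mono' hhm.aestronglyMeasurable
      (Eventually.of_forall fun x => by simpa [Real.norm_eq_abs] using hhbd x)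
  -- eventual bounds
  have ev1 : ∀ᶠ N in atTop, (μ N t).toReal < 2 * δ := by
    have hlt : μ' t < ENNReal.ofReal (2 * δ) := lt_of_le_of_lt htμ
      (by rw [ENNReal.ofReal_lt_ofReal_iff (by positivity)]; linarith)
    filter_upwards [(hset t htm).eventually_lt_const hlt] with N hN
    exact ENNReal.toReal_lt_of_lt_ofReal hN
  have ev2 : ∀ᶠ N in atTop, ∀ x ∈ tᶜ, dist (g x) (f N x) < δ' :=
    Metric.tendstoUniformlyOn_iff.mp htu δ' hδ'0
  have ev3 : ∀ᶠ N in atTop, dist (∫ x, h x ∂(μ N)) (∫ x, h x ∂μ') < ε / 4 :=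
    Metric.tendsto_nhds.mp hT3 (ε / 4) (by positivity)
  filter_upwards [ev1, ev2, ev3] with N h1 h2 h3
  have intf : Integrable (f N) (μ N) := (integrable_const M').mono'
    (hfm N).aestronglyMeasurable
    (Eventually.of_forall fun x => by simpa [Real.norm_eq_abs] using hub' N x)
  have inthN : Integrable (tᶜ.indicator (f N)) (μ N) := intf.indicator htm.compl
  have intconst : Integrable (t.indicator fun _ => M') (μ N) :=
    (integrable_const M').indicator htm
  -- A1
  have A1 : |∫ x, f N x ∂(μ N) - ∫ x, tᶜ.indicator (f N) x ∂(μ N)|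
      ≤ M' * (μ N t).toReal := by
    rw [← integral_sub intf inthN]
    calc |∫ x, (f N x - tᶜ.indicator (f N) x) ∂(μ N)|
        ≤ ∫ x, |f N x - tᶜ.indicator (f N) x| ∂(μ N) := by
          simpa [Real.norm_eq_abs] using
            norm_integral_le_integral_norm (fun x => f N x - tᶜ.indicator (f N) x) (μ := μ N)
      _ ≤ ∫ x, t.indicator (fun _ => M') x ∂(μ N) := by
          refine integral_mono (intf.sub inthN).abs intconst fun x => ?_
          by_cases hx : x ∈ t
          · rw [Set.indicator_of_mem hx, Set.indicator_of_notMem (by simpa using hx)]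
            simpa using hub' N x
          · rw [Set.indicator_of_notMem hx,
              Set.indicator_of_mem (by simpa using hx)]
            simp
      _ = M' * (μ N t).toReal := by
          rw [integral_indicator_const _ htm, smul_eq_mul, mul_comm]; rfl
  -- A2
  have A2 : |∫ x, tᶜ.indicator (f N) x ∂(μ N) - ∫ x, h x ∂(μ N)|
      ≤ (C.toReal + 1) * δ' := by
    rw [← integral_sub inthN (inth (μ N))]
    calc |∫ x, (tᶜ.indicator (f N) x - h x) ∂(μ N)|
        ≤ ∫ x, |tᶜ.indicator (f N) x - h x| ∂(μ N) := by
          simpa [Real.norm_eq_abs] using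
            norm_integral_le_integral_norm (fun x => tᶜ.indicator (f N) x - h x) (μ := μ N)
      _ ≤ ∫ _x, δ' ∂(μ N) := by
          refine integral_mono (inthN.sub (inth (μ N))).abs (integrable_const δ') fun x => ?_
          by_cases hx : x ∈ tᶜ
          · rw [hh, Set.indicator_of_mem hx, Set.indicator_of_mem hx]
            have := h2 x hx
            rw [Real.dist_eq, abs_sub_comm] at this
            exact this.le
          · rw [hh, Set.indicator_of_notMem hx, Set.indicator_of_notMem hx]
            simpa using hδ'0.le
      _ = (μ N Set.univ).toReal * δ' := by rw [integral_const, smul_eq_mul]; rfl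
      _ ≤ (C.toReal + 1) * δ' := by
          exact mul_le_mul_of_nonneg_right (hmass N) hδ'0.le
  -- A4
  have A4 : |∫ x, h x ∂μ' - ∫ x, g x ∂μ'| ≤ M' * δ := by
    rw [← integral_sub (inth μ') hgint]
    calc |∫ x, (h x - g x) ∂μ'|
        ≤ ∫ x, |h x - g x| ∂μ' := by
          simpa [Real.norm_eq_abs] using
            norm_integral_le_integral_norm (fun x => h x - g x) (μ := μ')
      _ ≤ ∫ x, t.indicator (fun _ => M') x ∂μ' := by
          refine integral_mono_ae ((inth μ').sub hgint).abs
            ((integrable_const M').indicator htm) ?_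
          filter_upwards [hgbd] with x hgx
          by_cases hx : x ∈ t
          · rw [hh, Set.indicator_of_notMem (by simpa using hx), Set.indicator_of_mem hx]
            simpa using hgx
          · rw [hh, Set.indicator_of_mem (by simpa using hx),
              Set.indicator_of_notMem hx]
            simp
      _ = M' * (μ' t).toReal := by
          rw [integral_indicator_const _ htm, smul_eq_mul, mul_comm]; rfl
      _ ≤ M' * δ := mul_le_mul_of_nonneg_left
          (ENNReal.toReal_le_of_le_ofReal hδ0.le htμ) hM'0
  -- combine
  rw [Real.dist_eq]
  have key : ∫ x, f N x ∂(μ N) - ∫ x, g x ∂μ'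
      = (∫ x, f N x ∂(μ N) - ∫ x, tᶜ.indicator (f N) x ∂(μ N))
        + (∫ x, tᶜ.indicator (f N) x ∂(μ N) - ∫ x, h x ∂(μ N))
        + (∫ x, h x ∂(μ N) - ∫ x, h x ∂μ')
        + (∫ x, h x ∂μ' - ∫ x, g x ∂μ') := by ring
  rw [key]
  have habs : |(∫ x, f N x ∂(μ N) - ∫ x, tᶜ.indicator (f N) x ∂(μ N))
        + (∫ x, tᶜ.indicator (f N) x ∂(μ N) - ∫ x, h x ∂(μ N))
        + (∫ x, h x ∂(μ N) - ∫ x, h x ∂μ')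
        + (∫ x, h x ∂μ' - ∫ x, g x ∂μ')|
      ≤ |∫ x, f N x ∂(μ N) - ∫ x, tᶜ.indicator (f N) x ∂(μ N)|
        + |∫ x, tᶜ.indicator (f N) x ∂(μ N) - ∫ x, h x ∂(μ N)|
        + |∫ x, h x ∂(μ N) - ∫ x, h x ∂μ'|
        + |∫ x, h x ∂μ' - ∫ x, g x ∂μ'| := by
    exact (abs_add_le _ _).trans (add_le_add_left ((abs_add_le _ _).trans
      (add_le_add_left (abs_add_le _ _) _)) _)
  rw [Real.dist_eq] at h3
  have hmul : M' * (μ N t).toReal ≤ M' * (2 * δ) :=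
    mul_le_mul_of_nonneg_left h1.le hM'0
  nlinarith [A1, A2, A4, habs, h3, hδeq, hδ'eq, hM'0, hδ0, hδ'0]
end
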